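/- Let z₀ > 0. Assume ∫_{(-∞,-1]} y² e^{z₀|y|} ν(dy) < ∞ and ∫_{[1,∞)} y² ν(dy) < ∞, so that J″(z) is finite for every z ∈ [0, z₀]. Then J″ is Lipschitz continuous on the interval [0, z₀] if and only if ∫_{(-∞,-1]} |y|³ e^{z₀|y|} ν(dy) < ∞ and ∫_{[1,∞)} y³ ν(dy) < ∞. -/

import Mathlib

open MeasureTheory Filter

lemma abs_exp_sub_exp_le (a b : ℝ) :
    |Real.exp a - Real.exp b| ≤ |a - b| * Real.exp (max a b) := by
  wlog h : b ≤ a generalizing a b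
  · rw [abs_sub_comm, abs_sub_comm a b, max_comm]; exact this _ _ (le_of_not_ge h)
  rw [abs_of_nonneg (sub_nonneg.2 h), max_eq_left h, abs_of_nonneg (sub_nonneg.2 (Real.exp_le_exp.2 h))]
  have h2 : Real.exp a * ((b - a) + 1) ≤ Real.exp a * Real.exp (b - a) :=
    mul_le_mul_of_nonneg_left (Real.add_one_le_exp _) (Real.exp_pos _).le
  rw [← Real.exp_add, add_sub_cancel] at h2
  nlinarith [Real.exp_pos a]

lemma integrable_min_sq (ν : Measure ℝ) (hν : ∫⁻ y, ENNReal.ofReal (min (y ^ 2) 1) ∂ν < ⊤) :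
    Integrable (fun y => min (y ^ 2) 1) ν := by
  refine ⟨(Continuous.min (by continuity) continuous_const).aestronglyMeasurable, ?_⟩
  rw [hasFiniteIntegral_iff_ofReal (Eventually.of_forall fun y => le_min (sq_nonneg y) one_pos.le)]
  exact hν

lemma integrable_of_three {ν : Measure ℝ} {f : ℝ → ℝ}
    (ha : IntegrableOn f (Set.Iic (-1)) ν) (hb : IntegrableOn f (Set.Ioo (-1) 1) ν)
    (hc : IntegrableOn f (Set.Ici 1) ν) : Integrable f ν := by
  have hu : Set.Iic (-1:ℝ) ∪ (Set.Ioo (-1) 1 ∪ Set.Ici 1) = Set.univ := by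
    rw [Set.Ioo_union_Ici_eq_Ioi (by norm_num : (-1:ℝ) < 1), Set.Iic_union_Ioi]
  rw [← integrableOn_univ, ← hu]
  exact ha.union (hb.union hc)

lemma disj_mid : Disjoint (Set.Ioo (-1:ℝ) 1) (Set.Ici 1) := by
  rw [Set.disjoint_left]; rintro x ⟨_, h⟩ h2; exact absurd h2 (not_le.2 h)

lemma integral_three {ν : Measure ℝ} {f : ℝ → ℝ} (hf : Integrable f ν) :
    ∫ y, f y ∂ν = (∫ y in Set.Iic (-1), f y ∂ν) + ((∫ y in Set.Ioo (-1) 1, f y ∂ν)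
      + (∫ y in Set.Ici 1, f y ∂ν)) := by
  have hu : Set.Iic (-1:ℝ) ∪ (Set.Ioo (-1) 1 ∪ Set.Ici 1) = Set.univ := by
    rw [Set.Ioo_union_Ici_eq_Ioi (by norm_num : (-1:ℝ) < 1), Set.Iic_union_Ioi]
  have hd1 : Disjoint (Set.Iic (-1:ℝ)) (Set.Ioo (-1) 1 ∪ Set.Ici 1) := by
    rw [Set.Ioo_union_Ici_eq_Ioi (by norm_num : (-1:ℝ) < 1)]
    exact Set.Iic_disjoint_Ioi le_rfl
  rw [← setIntegral_univ, ← hu,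
    setIntegral_union hd1 ((measurableSet_Ioo.union measurableSet_Ici)) hf.integrableOn
      hf.integrableOn,
    setIntegral_union disj_mid measurableSet_Ici hf.integrableOn hf.integrableOn]

lemma F_diff_bound (a b y : ℝ) :
    |y ^ 2 * Real.exp (-(a * y)) - y ^ 2 * Real.exp (-(b * y))| ≤
      |a - b| * (|y| ^ 3 * Real.exp (max (-(a * y)) (-(b * y)))) := by
  have h := abs_exp_sub_exp_le (-(a * y)) (-(b * y))
  have h2 : |(-(a * y)) - (-(b * y))| = |a - b| * |y| := by
    rw [show (-(a * y)) - (-(b * y)) = (b - a) * y by ring, abs_mul, abs_sub_comm]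
  rw [← mul_sub, abs_mul, abs_of_nonneg (sq_nonneg y)]
  calc y ^ 2 * |Real.exp (-(a * y)) - Real.exp (-(b * y))|
      ≤ y ^ 2 * (|a - b| * |y| * Real.exp (max (-(a * y)) (-(b * y)))) := by
        refine mul_le_mul_of_nonneg_left ?_ (sq_nonneg y)
        rw [← h2]; exact h
    _ = |a - b| * (|y| ^ 3 * Real.exp (max (-(a * y)) (-(b * y)))) := by
        rw [show |y| ^ 3 = y ^ 2 * |y| by rw [pow_succ, sq_abs]]
        ring

lemma fatou_aux {ν : Measure ℝ} {s : Set ℝ} (hs : MeasurableSet s) {φ : ℕ → ℝ → ℝ}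
    {g : ℝ → ℝ} {M : ℝ}
    (hφc : ∀ n, Continuous (φ n))
    (hφnn : ∀ n, ∀ y ∈ s, 0 ≤ φ n y)
    (hbd : ∀ n, ∫ y in s, φ n y ∂ν ≤ M)
    (hφint : ∀ n, IntegrableOn (φ n) s ν)
    (hg : Continuous g)
    (hgnn : ∀ y ∈ s, 0 ≤ g y)
    (hlim : ∀ y ∈ s, Filter.Tendsto (fun n => φ n y) Filter.atTop (nhds (g y))) :
    IntegrableOn g s ν := by
  refine ⟨hg.aestronglyMeasurable.restrict, ?_⟩
  rw [hasFiniteIntegral_iff_ofReal ((ae_restrict_iff' hs).2 (Filter.Eventually.of_forall hgnn))]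
  have step1 : ∫⁻ y in s, ENNReal.ofReal (g y) ∂ν
      = ∫⁻ y in s, Filter.liminf (fun n => ENNReal.ofReal (φ n y)) Filter.atTop ∂ν := by
    refine setLIntegral_congr_fun hs (fun y hy => ?_)
    exact ((ENNReal.continuous_ofReal.tendsto _).comp (hlim y hy)).liminf_eq.symm
  have step2 : ∫⁻ y in s, Filter.liminf (fun n => ENNReal.ofReal (φ n y)) Filter.atTop ∂ν
      ≤ Filter.liminf (fun n => ∫⁻ y in s, ENNReal.ofReal (φ n y) ∂ν) Filter.atTop :=
    lintegral_liminf_le fun n => ENNReal.measurable_ofReal.comp (hφc n).measurable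
  have step3 : Filter.liminf (fun n => ∫⁻ y in s, ENNReal.ofReal (φ n y) ∂ν) Filter.atTop
      ≤ ENNReal.ofReal M := by
    have heach : ∀ n, ∫⁻ y in s, ENNReal.ofReal (φ n y) ∂ν ≤ ENNReal.ofReal M := fun n => by
      rw [← ofReal_integral_eq_lintegral_ofReal (hφint n)
        ((ae_restrict_iff' hs).2 (Filter.Eventually.of_forall (hφnn n)))]
      exact ENNReal.ofReal_le_ofReal (hbd n)
    calc Filter.liminf (fun n => ∫⁻ y in s, ENNReal.ofReal (φ n y) ∂ν) Filter.atTop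
        ≤ Filter.liminf (fun _ : ℕ => ENNReal.ofReal M) Filter.atTop :=
          Filter.liminf_le_liminf (Filter.Eventually.of_forall heach)
      _ = ENNReal.ofReal M := Filter.liminf_const _
  exact lt_of_le_of_lt (step1 ▸ le_trans step2 step3) ENNReal.ofReal_lt_top

lemma integrable_F {ν : Measure ℝ} {z₀ : ℝ} (hz₀ : 0 < z₀)
    (hmin : Integrable (fun y => min (y ^ 2) 1) ν)
    (h1 : IntegrableOn (fun y => y ^ 2 * Real.exp (z₀ * |y|)) (Set.Iic (-1)) ν)
    (h2 : IntegrableOn (fun y => y ^ 2) (Set.Ici 1) ν)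
    {z : ℝ} (hz : z ∈ Set.Icc 0 z₀) :
    Integrable (fun y => y ^ 2 * Real.exp (-(z * y))) ν := by
  obtain ⟨hz0, hzz⟩ := hz
  have hcont : Continuous (fun y : ℝ => y ^ 2 * Real.exp (-(z * y))) := by continuity
  refine integrable_of_three ?_ ?_ ?_
  · refine h1.mono' hcont.aestronglyMeasurable.restrict ?_
    refine (ae_restrict_iff' measurableSet_Iic).2 (Filter.Eventually.of_forall fun y hy => ?_)
    have hy1 : y ≤ -1 := hy
    rw [Real.norm_eq_abs, abs_mul, abs_of_nonneg (sq_nonneg y),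
      abs_of_nonneg (Real.exp_pos _).le]
    refine mul_le_mul_of_nonneg_left (Real.exp_le_exp.2 ?_) (sq_nonneg y)
    rw [abs_of_nonpos (by linarith : y ≤ 0)]
    nlinarith
  · refine ((hmin.const_mul (Real.exp z₀)).integrableOn).mono'
      hcont.aestronglyMeasurable.restrict ?_
    refine (ae_restrict_iff' measurableSet_Ioo).2 (Filter.Eventually.of_forall fun y hy => ?_)
    obtain ⟨hya, hyb⟩ := hy
    have habs : |y| ≤ 1 := abs_le.2 ⟨hya.le, hyb.le⟩
    have hsq : y ^ 2 ≤ 1 := by nlinarith [abs_nonneg y, sq_abs y]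
    rw [Real.norm_eq_abs, abs_mul, abs_of_nonneg (sq_nonneg y),
      abs_of_nonneg (Real.exp_pos _).le, min_eq_left hsq]
    have hexp : Real.exp (-(z * y)) ≤ Real.exp z₀ := by
      refine Real.exp_le_exp.2 ?_
      have ha : -(z * y) ≤ z * |y| := by
        rcases le_or_gt 0 y with h | h
        · rw [abs_of_nonneg h]; nlinarith
        · rw [abs_of_neg h]; nlinarith
      have hb : z * |y| ≤ z₀ := by nlinarith [abs_nonneg y]
      linarith
    nlinarith [sq_nonneg y, Real.exp_pos (-(z * y))]
  · refine h2.mono' hcont.aestronglyMeasurable.restrict ?_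
    refine (ae_restrict_iff' measurableSet_Ici).2 (Filter.Eventually.of_forall fun y hy => ?_)
    have hy1 : (1:ℝ) ≤ y := hy
    rw [Real.norm_eq_abs, abs_mul, abs_of_nonneg (sq_nonneg y),
      abs_of_nonneg (Real.exp_pos _).le]
    have : Real.exp (-(z * y)) ≤ 1 := Real.exp_le_one_iff.2 (by nlinarith)
    nlinarith [sq_nonneg y]

lemma neg_mul_le_aux {z₀ z y : ℝ} (h0 : 0 ≤ z) (h1 : z ≤ z₀) :
    -(z * y) ≤ z₀ * max (-y) 0 := by
  rcases le_or_gt 0 y with h | h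
  · have ha : -(z * y) ≤ 0 := by nlinarith
    have hb : 0 ≤ z₀ * max (-y) 0 :=
      mul_nonneg (le_trans h0 h1) (le_max_right _ _)
    linarith
  · rw [max_eq_left (by linarith : (0:ℝ) ≤ -y)]; nlinarith

lemma integrable_g {ν : Measure ℝ} {z₀ : ℝ} (hz₀ : 0 < z₀)
    (hmin : Integrable (fun y => min (y ^ 2) 1) ν)
    (hneg : IntegrableOn (fun y => |y| ^ 3 * Real.exp (z₀ * |y|)) (Set.Iic (-1)) ν)
    (hpos : IntegrableOn (fun y => y ^ 3) (Set.Ici 1) ν) :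
    Integrable (fun y => |y| ^ 3 * Real.exp (z₀ * max (-y) 0)) ν := by
  have hcont : Continuous (fun y : ℝ => |y| ^ 3 * Real.exp (z₀ * max (-y) 0)) := by
    exact ((continuous_abs.pow 3).mul
      ((continuous_const.mul ((continuous_neg).max continuous_const)).rexp))
  refine integrable_of_three ?_ ?_ ?_
  · refine hneg.mono' hcont.aestronglyMeasurable.restrict ?_
    refine (ae_restrict_iff' measurableSet_Iic).2 (Filter.Eventually.of_forall fun y hy => ?_)
    have hy1 : y ≤ -1 := hy
    have hmax : max (-y) 0 = |y| := by
      rw [abs_of_nonpos (by linarith : y ≤ 0), max_eq_left (by linarith : (0:ℝ) ≤ -y)]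
    rw [Real.norm_eq_abs, hmax, abs_of_nonneg (by positivity)]
  · refine ((hmin.const_mul (Real.exp z₀)).integrableOn).mono'
      hcont.aestronglyMeasurable.restrict ?_
    refine (ae_restrict_iff' measurableSet_Ioo).2 (Filter.Eventually.of_forall fun y hy => ?_)
    obtain ⟨hya, hyb⟩ := hy
    have habs : |y| ≤ 1 := abs_le.2 ⟨hya.le, hyb.le⟩
    have hsq : y ^ 2 ≤ 1 := by nlinarith [abs_nonneg y, sq_abs y]
    rw [Real.norm_eq_abs, abs_of_nonneg (by positivity), min_eq_left hsq]
    have hcube : |y| ^ 3 ≤ y ^ 2 := by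
      rw [show |y| ^ 3 = |y| ^ 2 * |y| by ring, sq_abs]
      nlinarith [sq_nonneg y, abs_nonneg y]
    have hexp : Real.exp (z₀ * max (-y) 0) ≤ Real.exp z₀ := by
      refine Real.exp_le_exp.2 ?_
      have : max (-y) 0 ≤ 1 := max_le (by linarith) one_pos.le
      nlinarith
    nlinarith [Real.exp_pos (z₀ * max (-y) 0), abs_nonneg y, pow_nonneg (abs_nonneg y) 3]
  · refine hpos.mono' hcont.aestronglyMeasurable.restrict ?_
    refine (ae_restrict_iff' measurableSet_Ici).2 (Filter.Eventually.of_forall fun y hy => ?_)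
    have hy1 : (1:ℝ) ≤ y := hy
    have hmax : max (-y) 0 = 0 := max_eq_right (by linarith)
    rw [Real.norm_eq_abs, hmax, mul_zero, Real.exp_zero, mul_one,
      abs_of_nonneg (le_trans zero_le_one hy1), abs_of_nonneg (by positivity : (0:ℝ) ≤ y ^ 3)]

noncomputable def Fz (z y : ℝ) : ℝ := y ^ 2 * Real.exp (-(z * y))

lemma continuous_Fz (z : ℝ) : Continuous (Fz z) := by
  unfold Fz; continuity

lemma mul_exp_neg_le {d y : ℝ} (hd : 0 < d) : y * Real.exp (-(d * y)) ≤ 1 / d := by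
  have h6 : d * y ≤ Real.exp (d * y) := by linarith [Real.add_one_le_exp (d * y)]
  have hE : 0 < Real.exp (d * y) := Real.exp_pos _
  rw [Real.exp_neg, ← div_eq_mul_inv, div_le_div_iff₀ hE hd]
  nlinarith

lemma le_exp_div {d t : ℝ} (hd : 0 < d) : t ≤ 1 / d * Real.exp (d * t) := by
  rw [one_div, inv_mul_eq_div, le_div_iff₀ hd]
  nlinarith [Real.add_one_le_exp (d * t)]

lemma seq_tendsto_aux (δ z₀ : ℝ) (hδ : 0 < δ) :
    Filter.Tendsto (fun n : ℕ => z₀ - δ / (n + 1)) Filter.atTop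
      (nhdsWithin z₀ {z₀}ᶜ) := by
  have hden : Filter.Tendsto (fun n : ℕ => (n : ℝ) + 1) Filter.atTop Filter.atTop :=
    Filter.tendsto_atTop_add_const_right Filter.atTop 1 tendsto_natCast_atTop_atTop
  have h0 : Filter.Tendsto (fun n : ℕ => δ / ((n : ℝ) + 1)) Filter.atTop (nhds 0) :=
    Filter.Tendsto.div_atTop tendsto_const_nhds hden
  have h1 : Filter.Tendsto (fun n : ℕ => z₀ - δ / (n + 1)) Filter.atTop (nhds z₀) := by
    have h2 : Filter.Tendsto (fun n : ℕ => z₀ - δ / ((n:ℝ) + 1)) Filter.atTop (nhds (z₀ - 0)) :=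
      Filter.Tendsto.sub (f := fun _ : ℕ => z₀) tendsto_const_nhds h0
    simpa using h2
  refine tendsto_nhdsWithin_of_tendsto_nhds_of_eventually_within _ h1
    (Filter.Eventually.of_forall fun n => ?_)
  have hpos : 0 < δ / ((n : ℝ) + 1) := by positivity
  simp only [Set.mem_compl_iff, Set.mem_singleton_iff]
  intro h; rw [sub_eq_self] at h; linarith

lemma seq_tendsto_aux' (δ : ℝ) (hδ : 0 < δ) :
    Filter.Tendsto (fun n : ℕ => δ / ((n:ℝ) + 1)) Filter.atTop
      (nhdsWithin 0 {(0:ℝ)}ᶜ) := by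
  have hden : Filter.Tendsto (fun n : ℕ => (n : ℝ) + 1) Filter.atTop Filter.atTop :=
    Filter.tendsto_atTop_add_const_right Filter.atTop 1 tendsto_natCast_atTop_atTop
  have h0 : Filter.Tendsto (fun n : ℕ => δ / ((n : ℝ) + 1)) Filter.atTop (nhds 0) :=
    Filter.Tendsto.div_atTop tendsto_const_nhds hden
  refine tendsto_nhdsWithin_of_tendsto_nhds_of_eventually_within _ h0
    (Filter.Eventually.of_forall fun n => ?_)
  have hpos : 0 < δ / ((n : ℝ) + 1) := by positivity
  simp only [Set.mem_compl_iff, Set.mem_singleton_iff]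
  exact ne_of_gt hpos

/-- The second derivative of the Laplace exponent:
`J″(z) = q + ∫ y² e^{−zy} ν(dy)`. -/
noncomputable def Jsecond (ν : Measure ℝ) (q : ℝ) (z : ℝ) : ℝ :=
  q + ∫ y, y ^ 2 * Real.exp (-(z * y)) ∂ν

lemma forward (ν : Measure ℝ) (q z₀ : ℝ) (hz₀ : 0 < z₀)
    (hmin : Integrable (fun y => min (y ^ 2) 1) ν)
    (h1 : IntegrableOn (fun y => y ^ 2 * Real.exp (z₀ * |y|)) (Set.Iic (-1)) ν)
    (h2 : IntegrableOn (fun y => y ^ 2) (Set.Ici 1) ν)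
    (K : NNReal) (hK : LipschitzOnWith K (Jsecond ν q) (Set.Icc 0 z₀)) :
    IntegrableOn (fun y => |y| ^ 3 * Real.exp (z₀ * |y|)) (Set.Iic (-1)) ν ∧
      IntegrableOn (fun y => y ^ 3) (Set.Ici 1) ν := by
  have hKd : ∀ a ∈ Set.Icc (0:ℝ) z₀, ∀ b ∈ Set.Icc (0:ℝ) z₀,
      |Jsecond ν q a - Jsecond ν q b| ≤ (K:ℝ) * |a - b| := by
    intro a ha b hb
    have h := lipschitzOnWith_iff_dist_le_mul.1 hK a ha b hb
    rwa [Real.dist_eq, Real.dist_eq] at h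
  have hFint : ∀ z ∈ Set.Icc (0:ℝ) z₀, Integrable (Fz z) ν := fun z hz =>
    integrable_F hz₀ hmin h1 h2 hz
  have hJd : ∀ a ∈ Set.Icc (0:ℝ) z₀, ∀ b ∈ Set.Icc (0:ℝ) z₀,
      ∫ y, (Fz a y - Fz b y) ∂ν = Jsecond ν q a - Jsecond ν q b := by
    intro a ha b hb
    rw [integral_sub (hFint a ha) (hFint b hb)]
    simp only [Jsecond, Fz]; ring
  set δ := z₀ / 2 with hδdef
  have hδpos : 0 < δ := by positivity
  have hδle : δ ≤ z₀ := by rw [hδdef]; linarith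
  have hinvδ : 1 / δ = 2 / z₀ := by rw [hδdef]; field_simp
  have hz₀mem : z₀ ∈ Set.Icc (0:ℝ) z₀ := ⟨hz₀.le, le_rfl⟩
  have hz₀memδ : z₀ ∈ Set.Icc δ z₀ := ⟨hδle, le_rfl⟩
  have h0mem : (0:ℝ) ∈ Set.Icc (0:ℝ) z₀ := ⟨le_rfl, hz₀.le⟩
  have h0memδ : (0:ℝ) ∈ Set.Icc (0:ℝ) δ := ⟨le_rfl, hδpos.le⟩
  -- middle estimate
  have hmid : ∀ a ∈ Set.Icc (0:ℝ) z₀, ∀ b ∈ Set.Icc (0:ℝ) z₀,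
      |∫ y in Set.Ioo (-1:ℝ) 1, (Fz a y - Fz b y) ∂ν|
        ≤ |a - b| * (Real.exp z₀ * ∫ y, min (y ^ 2) 1 ∂ν) := by
    intro a ha b hb
    have hbint : Integrable (fun y => |a - b| * (Real.exp z₀ * min (y ^ 2) 1)) ν :=
      (hmin.const_mul _).const_mul _
    have hnn : 0 ≤ᵐ[ν] fun y => |a - b| * (Real.exp z₀ * min (y ^ 2) 1) :=
      Filter.Eventually.of_forall fun y => mul_nonneg (abs_nonneg _)
        (mul_nonneg (Real.exp_pos _).le (le_min (sq_nonneg y) one_pos.le))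
    have hpt : ∀ y ∈ Set.Ioo (-1:ℝ) 1,
        ‖Fz a y - Fz b y‖ ≤ |a - b| * (Real.exp z₀ * min (y ^ 2) 1) := by
      intro y hy
      obtain ⟨hya, hyb⟩ := hy
      have habs : |y| ≤ 1 := abs_le.2 ⟨hya.le, hyb.le⟩
      have hsq : y ^ 2 ≤ 1 := by nlinarith [sq_abs y, abs_nonneg y]
      rw [Real.norm_eq_abs]
      refine le_trans (F_diff_bound a b y) (mul_le_mul_of_nonneg_left ?_ (abs_nonneg _))
      have h3 : |y| ^ 3 ≤ min (y ^ 2) 1 := by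
        rw [min_eq_left hsq, show |y| ^ 3 = |y| ^ 2 * |y| by ring, sq_abs]
        nlinarith [sq_nonneg y, abs_nonneg y]
      have hexpb : Real.exp (max (-(a * y)) (-(b * y))) ≤ Real.exp z₀ := by
        refine Real.exp_le_exp.2 (max_le ?_ ?_)
        · have h5 : -(a * y) ≤ |a * y| := neg_le_abs _
          rw [abs_mul, abs_of_nonneg ha.1] at h5
          nlinarith [abs_nonneg y, ha.2, ha.1]
        · have h5 : -(b * y) ≤ |b * y| := neg_le_abs _
          rw [abs_mul, abs_of_nonneg hb.1] at h5
          nlinarith [abs_nonneg y, hb.2, hb.1]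
      calc |y| ^ 3 * Real.exp (max (-(a * y)) (-(b * y)))
          ≤ min (y ^ 2) 1 * Real.exp z₀ :=
            mul_le_mul h3 hexpb (Real.exp_pos _).le (le_min (sq_nonneg y) one_pos.le)
        _ = Real.exp z₀ * min (y ^ 2) 1 := mul_comm _ _
    calc |∫ y in Set.Ioo (-1:ℝ) 1, (Fz a y - Fz b y) ∂ν|
        ≤ ∫ y in Set.Ioo (-1:ℝ) 1, |a - b| * (Real.exp z₀ * min (y ^ 2) 1) ∂ν := by
          rw [← Real.norm_eq_abs]
          exact norm_integral_le_of_norm_le hbint.integrableOn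
            ((ae_restrict_iff' measurableSet_Ioo).2 (Filter.Eventually.of_forall hpt))
      _ ≤ ∫ y, |a - b| * (Real.exp z₀ * min (y ^ 2) 1) ∂ν := setIntegral_le_integral hbint hnn
      _ = |a - b| * (Real.exp z₀ * ∫ y, min (y ^ 2) 1 ∂ν) := by
          rw [integral_const_mul, integral_const_mul]
  -- positive tail estimate (both points ≥ δ)
  have htail : ∀ a ∈ Set.Icc δ z₀, ∀ b ∈ Set.Icc δ z₀,
      |∫ y in Set.Ici (1:ℝ), (Fz a y - Fz b y) ∂ν|
        ≤ |a - b| * ((2 / z₀) * ∫ y in Set.Ici 1, y ^ 2 ∂ν) := by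
    intro a ha b hb
    have hbint : IntegrableOn (fun y => |a - b| * ((2 / z₀) * y ^ 2)) (Set.Ici 1) ν :=
      (h2.const_mul _).const_mul _
    have hpt : ∀ y ∈ Set.Ici (1:ℝ),
        ‖Fz a y - Fz b y‖ ≤ |a - b| * ((2 / z₀) * y ^ 2) := by
      intro y hy
      have hy1 : (1:ℝ) ≤ y := hy
      have hy0 : (0:ℝ) ≤ y := by linarith
      rw [Real.norm_eq_abs]
      refine le_trans (F_diff_bound a b y) (mul_le_mul_of_nonneg_left ?_ (abs_nonneg _))
      have habs : |y| = y := abs_of_nonneg hy0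
      have hmax : max (-(a * y)) (-(b * y)) ≤ -(δ * y) :=
        max_le (by nlinarith [ha.1, ha.2]) (by nlinarith [hb.1, hb.2])
      calc |y| ^ 3 * Real.exp (max (-(a * y)) (-(b * y)))
          ≤ y ^ 3 * Real.exp (-(δ * y)) := by
            rw [habs]
            exact mul_le_mul_of_nonneg_left (Real.exp_le_exp.2 hmax) (by positivity)
        _ = y ^ 2 * (y * Real.exp (-(δ * y))) := by ring
        _ ≤ y ^ 2 * (1 / δ) := mul_le_mul_of_nonneg_left (mul_exp_neg_le hδpos) (sq_nonneg y)
        _ = (2 / z₀) * y ^ 2 := by rw [hinvδ]; ring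
    calc |∫ y in Set.Ici (1:ℝ), (Fz a y - Fz b y) ∂ν|
        ≤ ∫ y in Set.Ici (1:ℝ), |a - b| * ((2 / z₀) * y ^ 2) ∂ν := by
          rw [← Real.norm_eq_abs]
          exact norm_integral_le_of_norm_le hbint
            ((ae_restrict_iff' measurableSet_Ici).2 (Filter.Eventually.of_forall hpt))
      _ = |a - b| * ((2 / z₀) * ∫ y in Set.Ici 1, y ^ 2 ∂ν) := by
          rw [integral_const_mul, integral_const_mul]
  -- negative tail estimate (both points ≤ δ)
  have hnegtail : ∀ a ∈ Set.Icc (0:ℝ) δ, ∀ b ∈ Set.Icc (0:ℝ) δ,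
      |∫ y in Set.Iic (-1:ℝ), (Fz a y - Fz b y) ∂ν|
        ≤ |a - b| * ((2 / z₀) * ∫ y in Set.Iic (-1), y ^ 2 * Real.exp (z₀ * |y|) ∂ν) := by
    intro a ha b hb
    have hbint : IntegrableOn (fun y => |a - b| * ((2 / z₀) * (y ^ 2 * Real.exp (z₀ * |y|))))
        (Set.Iic (-1)) ν := (h1.const_mul _).const_mul _
    have hpt : ∀ y ∈ Set.Iic (-1:ℝ),
        ‖Fz a y - Fz b y‖ ≤ |a - b| * ((2 / z₀) * (y ^ 2 * Real.exp (z₀ * |y|))) := by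
      intro y hy
      have hy1 : y ≤ -1 := hy
      have hy0 : y ≤ 0 := by linarith
      have habs : |y| = -y := abs_of_nonpos hy0
      rw [Real.norm_eq_abs]
      refine le_trans (F_diff_bound a b y) (mul_le_mul_of_nonneg_left ?_ (abs_nonneg _))
      have hmax : max (-(a * y)) (-(b * y)) ≤ δ * |y| := by
        rw [habs]
        exact max_le (by nlinarith [ha.1, ha.2]) (by nlinarith [hb.1, hb.2])
      have hay : |y| ≤ 1 / δ * Real.exp (δ * |y|) := le_exp_div hδpos
      have hexps : Real.exp (δ * |y|) * Real.exp (δ * |y|) = Real.exp (z₀ * |y|) := by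
        rw [← Real.exp_add, hδdef]; ring_nf
      calc |y| ^ 3 * Real.exp (max (-(a * y)) (-(b * y)))
          ≤ |y| ^ 3 * Real.exp (δ * |y|) := by
            exact mul_le_mul_of_nonneg_left (Real.exp_le_exp.2 hmax) (by positivity)
        _ = y ^ 2 * (|y| * Real.exp (δ * |y|)) := by
            rw [show |y| ^ 3 = |y| ^ 2 * |y| by ring, sq_abs]; ring
        _ ≤ y ^ 2 * ((1 / δ * Real.exp (δ * |y|)) * Real.exp (δ * |y|)) := by
            refine mul_le_mul_of_nonneg_left ?_ (sq_nonneg y)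
            exact mul_le_mul_of_nonneg_right hay (Real.exp_pos _).le
        _ = (1 / δ) * (y ^ 2 * (Real.exp (δ * |y|) * Real.exp (δ * |y|))) := by ring
        _ = (2 / z₀) * (y ^ 2 * Real.exp (z₀ * |y|)) := by rw [hexps, hinvδ]
    calc |∫ y in Set.Iic (-1:ℝ), (Fz a y - Fz b y) ∂ν|
        ≤ ∫ y in Set.Iic (-1:ℝ), |a - b| * ((2 / z₀) * (y ^ 2 * Real.exp (z₀ * |y|))) ∂ν := by
          rw [← Real.norm_eq_abs]
          exact norm_integral_le_of_norm_le hbint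
            ((ae_restrict_iff' measurableSet_Iic).2 (Filter.Eventually.of_forall hpt))
      _ = |a - b| * ((2 / z₀) * ∫ y in Set.Iic (-1), y ^ 2 * Real.exp (z₀ * |y|) ∂ν) := by
          rw [integral_const_mul, integral_const_mul]
  -- the sequences
  have hcpos : ∀ n : ℕ, 0 < δ / ((n:ℝ) + 1) := fun n => by positivity
  have hcle : ∀ n : ℕ, δ / ((n:ℝ) + 1) ≤ δ := fun n => by
    rw [div_le_iff₀ (by positivity)]
    nlinarith [Nat.cast_nonneg (α := ℝ) n, hδpos]
  constructor
  · -- negative tail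
    set zs : ℕ → ℝ := fun n => z₀ - δ / ((n:ℝ) + 1) with hzs
    have hdiffc : ∀ n, z₀ - zs n = δ / ((n:ℝ) + 1) := fun n => by simp only [hzs]; ring
    have hmem : ∀ n, zs n ∈ Set.Icc (0:ℝ) z₀ := by
      intro n
      have ha := hcpos n; have hb := hcle n
      exact ⟨by simp only [hzs]; linarith, by simp only [hzs]; linarith⟩
    have hmemδ : ∀ n, zs n ∈ Set.Icc δ z₀ := by
      intro n
      have ha := hcpos n; have hb := hcle n
      have hz2 : δ = z₀ / 2 := hδdef
      exact ⟨by simp only [hzs]; linarith, by simp only [hzs]; linarith⟩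
    set M : ℝ := (K:ℝ) + Real.exp z₀ * (∫ y, min (y ^ 2) 1 ∂ν)
      + (2 / z₀) * ∫ y in Set.Ici 1, y ^ 2 ∂ν with hM
    have key : ∀ n, ∫ y in Set.Iic (-1:ℝ), (Fz z₀ y - Fz (zs n) y) ∂ν
        ≤ (z₀ - zs n) * M := by
      intro n
      have hzsn := hmem n
      have hIint : Integrable (fun y => Fz z₀ y - Fz (zs n) y) ν :=
        (hFint z₀ hz₀mem).sub (hFint _ hzsn)
      have hsplit := integral_three hIint
      have habs : |z₀ - zs n| = z₀ - zs n := abs_of_pos (by rw [hdiffc n]; exact hcpos n)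
      have hJ : ∫ y, (Fz z₀ y - Fz (zs n) y) ∂ν ≤ (K:ℝ) * (z₀ - zs n) := by
        rw [← habs]
        refine le_trans (le_abs_self _) ?_
        rw [hJd z₀ hz₀mem (zs n) hzsn]
        exact hKd z₀ hz₀mem (zs n) hzsn
      have hm := hmid z₀ hz₀mem (zs n) hzsn
      have ht := htail z₀ hz₀memδ (zs n) (hmemδ n)
      rw [habs] at hm ht
      have hm' : -(∫ y in Set.Ioo (-1:ℝ) 1, (Fz z₀ y - Fz (zs n) y) ∂ν)
          ≤ (z₀ - zs n) * (Real.exp z₀ * ∫ y, min (y ^ 2) 1 ∂ν) :=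
        le_trans (neg_le_abs _) hm
      have ht' : -(∫ y in Set.Ici (1:ℝ), (Fz z₀ y - Fz (zs n) y) ∂ν)
          ≤ (z₀ - zs n) * ((2 / z₀) * ∫ y in Set.Ici 1, y ^ 2 ∂ν) :=
        le_trans (neg_le_abs _) ht
      have hexpand : (z₀ - zs n) * M = (K:ℝ) * (z₀ - zs n)
          + (z₀ - zs n) * (Real.exp z₀ * ∫ y, min (y ^ 2) 1 ∂ν)
          + (z₀ - zs n) * ((2 / z₀) * ∫ y in Set.Ici 1, y ^ 2 ∂ν) := by
        rw [hM]; ring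
      have hI1 : ∫ y in Set.Iic (-1:ℝ), (Fz z₀ y - Fz (zs n) y) ∂ν
          = (∫ y, (Fz z₀ y - Fz (zs n) y) ∂ν)
            - ((∫ y in Set.Ioo (-1:ℝ) 1, (Fz z₀ y - Fz (zs n) y) ∂ν)
              + (∫ y in Set.Ici (1:ℝ), (Fz z₀ y - Fz (zs n) y) ∂ν)) := by
        rw [hsplit]; ring
      rw [hexpand, hI1]
      generalize hT : (∫ y, (Fz z₀ y - Fz (zs n) y) ∂ν) = T at hJ ⊢
      generalize hU : (∫ y in Set.Ioo (-1:ℝ) 1, (Fz z₀ y - Fz (zs n) y) ∂ν) = I2 at hm' ⊢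
      generalize hV : (∫ y in Set.Ici (1:ℝ), (Fz z₀ y - Fz (zs n) y) ∂ν) = I3 at ht' ⊢
      have hsum := add_le_add (add_le_add hJ hm') ht'
      have hre : T - (I2 + I3) = T + -I2 + -I3 := by ring
      rw [hre]
      exact hsum
    refine fatou_aux measurableSet_Iic
      (φ := fun n y => (Fz z₀ y - Fz (zs n) y) / (z₀ - zs n)) (M := M)
      ?_ ?_ ?_ ?_ ?_ ?_ ?_
    · intro n
      exact ((continuous_Fz z₀).sub (continuous_Fz (zs n))).div_const _
    · intro n y hy
      have hy1 : y ≤ -1 := hy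
      refine div_nonneg ?_ (by rw [hdiffc n]; exact (hcpos n).le)
      simp only [Fz]
      have hle : Real.exp (-(zs n * y)) ≤ Real.exp (-(z₀ * y)) := by
        refine Real.exp_le_exp.2 ?_
        have h7 := (hmem n).2
        nlinarith
      nlinarith [sq_nonneg y, hle]
    · intro n
      rw [integral_div, div_le_iff₀ (by rw [hdiffc n]; exact hcpos n), mul_comm]
      exact key n
    · intro n
      exact (((hFint z₀ hz₀mem).integrableOn).sub
        ((hFint _ (hmem n)).integrableOn)).div_const _
    · exact (continuous_abs.pow 3).mul ((continuous_const.mul continuous_abs).rexp)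
    · intro y _; positivity
    · intro y hy
      have hy1 : y ≤ -1 := hy
      have hψ : HasDerivAt (fun w : ℝ => Real.exp (-(w * y)))
          (Real.exp (-(z₀ * y)) * -y) z₀ := ((hasDerivAt_mul_const y).neg).exp
      have hsl := hasDerivAt_iff_tendsto_slope.1 hψ
      have hseq : Filter.Tendsto zs Filter.atTop (nhdsWithin z₀ {z₀}ᶜ) :=
        seq_tendsto_aux δ z₀ hδpos
      have htl := (hsl.comp hseq).const_mul (y ^ 2)
      have heq : ∀ n, y ^ 2 * slope (fun w : ℝ => Real.exp (-(w * y))) z₀ (zs n)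
          = (Fz z₀ y - Fz (zs n) y) / (z₀ - zs n) := by
        intro n
        have hne : zs n - z₀ ≠ 0 := by
          have h8 : zs n - z₀ = -(δ / ((n:ℝ) + 1)) := by simp only [hzs]; ring
          rw [h8]
          exact neg_ne_zero.2 (ne_of_gt (hcpos n))
        have hne' : z₀ - zs n ≠ 0 := by rw [hdiffc n]; exact ne_of_gt (hcpos n)
        rw [slope_def_field]
        simp only [Fz]
        field_simp
        ring
      have hval : y ^ 2 * (Real.exp (-(z₀ * y)) * -y) = |y| ^ 3 * Real.exp (z₀ * |y|) := by
        rw [abs_of_nonpos (by linarith : y ≤ 0), show z₀ * -y = -(z₀ * y) by ring]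
        ring
      rw [← hval]
      exact htl.congr heq
  · -- positive tail
    set ws : ℕ → ℝ := fun n => δ / ((n:ℝ) + 1) with hws
    have hwpos : ∀ n, 0 < ws n := fun n => hcpos n
    have hmem : ∀ n, ws n ∈ Set.Icc (0:ℝ) z₀ := fun n =>
      ⟨(hwpos n).le, le_trans (hcle n) hδle⟩
    have hmemδ : ∀ n, ws n ∈ Set.Icc (0:ℝ) δ := fun n => ⟨(hwpos n).le, hcle n⟩
    set M : ℝ := (K:ℝ) + Real.exp z₀ * (∫ y, min (y ^ 2) 1 ∂ν)
      + (2 / z₀) * ∫ y in Set.Iic (-1), y ^ 2 * Real.exp (z₀ * |y|) ∂ν with hM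
    have key : ∀ n, ∫ y in Set.Ici (1:ℝ), (Fz 0 y - Fz (ws n) y) ∂ν ≤ ws n * M := by
      intro n
      have hIint : Integrable (fun y => Fz 0 y - Fz (ws n) y) ν :=
        (hFint 0 h0mem).sub (hFint _ (hmem n))
      have hsplit := integral_three hIint
      have habs : |(0:ℝ) - ws n| = ws n := by
        rw [zero_sub, abs_neg, abs_of_pos (hwpos n)]
      have hJ : ∫ y, (Fz 0 y - Fz (ws n) y) ∂ν ≤ (K:ℝ) * ws n := by
        refine le_trans (le_abs_self _) ?_
        rw [hJd 0 h0mem (ws n) (hmem n)]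
        have h9 := hKd 0 h0mem (ws n) (hmem n)
        rwa [habs] at h9
      have hm := hmid 0 h0mem (ws n) (hmem n)
      have hn := hnegtail 0 h0memδ (ws n) (hmemδ n)
      rw [habs] at hm hn
      have hm' : -(∫ y in Set.Ioo (-1:ℝ) 1, (Fz 0 y - Fz (ws n) y) ∂ν)
          ≤ ws n * (Real.exp z₀ * ∫ y, min (y ^ 2) 1 ∂ν) :=
        le_trans (neg_le_abs _) hm
      have hn' : -(∫ y in Set.Iic (-1:ℝ), (Fz 0 y - Fz (ws n) y) ∂ν)
          ≤ ws n * ((2 / z₀) * ∫ y in Set.Iic (-1), y ^ 2 * Real.exp (z₀ * |y|) ∂ν) :=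
        le_trans (neg_le_abs _) hn
      have hexpand : ws n * M = (K:ℝ) * ws n
          + ws n * (Real.exp z₀ * ∫ y, min (y ^ 2) 1 ∂ν)
          + ws n * ((2 / z₀) * ∫ y in Set.Iic (-1), y ^ 2 * Real.exp (z₀ * |y|) ∂ν) := by
        rw [hM]; ring
      have hI1 : ∫ y in Set.Ici (1:ℝ), (Fz 0 y - Fz (ws n) y) ∂ν
          = (∫ y, (Fz 0 y - Fz (ws n) y) ∂ν)
            - ((∫ y in Set.Ioo (-1:ℝ) 1, (Fz 0 y - Fz (ws n) y) ∂ν)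
              + (∫ y in Set.Iic (-1:ℝ), (Fz 0 y - Fz (ws n) y) ∂ν)) := by
        rw [hsplit]; ring
      rw [hexpand, hI1]
      nlinarith [hJ, hm', hn']
    refine fatou_aux measurableSet_Ici
      (φ := fun n y => (Fz 0 y - Fz (ws n) y) / ws n) (M := M)
      ?_ ?_ ?_ ?_ ?_ ?_ ?_
    · intro n
      exact ((continuous_Fz 0).sub (continuous_Fz (ws n))).div_const _
    · intro n y hy
      have hy1 : (1:ℝ) ≤ y := hy
      refine div_nonneg ?_ (hwpos n).le
      simp only [Fz]
      have hle : Real.exp (-(ws n * y)) ≤ Real.exp (-(0 * y)) := by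
        refine Real.exp_le_exp.2 ?_
        have h7 := hwpos n
        nlinarith
      nlinarith [sq_nonneg y, hle]
    · intro n
      rw [integral_div, div_le_iff₀ (hwpos n), mul_comm]
      exact key n
    · intro n
      exact (((hFint 0 h0mem).integrableOn).sub
        ((hFint _ (hmem n)).integrableOn)).div_const _
    · exact continuous_pow 3
    · intro y hy
      have hy1 : (1:ℝ) ≤ y := hy
      positivity
    · intro y hy
      have hy1 : (1:ℝ) ≤ y := hy
      have hψ : HasDerivAt (fun w : ℝ => Real.exp (-(w * y)))
          (Real.exp (-((0:ℝ) * y)) * -y) 0 := ((hasDerivAt_mul_const y).neg).exp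
      have hsl := hasDerivAt_iff_tendsto_slope.1 hψ
      have hseq : Filter.Tendsto ws Filter.atTop (nhdsWithin 0 {(0:ℝ)}ᶜ) :=
        seq_tendsto_aux' δ hδpos
      have htl := ((hsl.comp hseq).const_mul (y ^ 2)).neg
      have heq : ∀ n, -(y ^ 2 * slope (fun w : ℝ => Real.exp (-(w * y))) 0 (ws n))
          = (Fz 0 y - Fz (ws n) y) / ws n := by
        intro n
        have hne : ws n ≠ 0 := ne_of_gt (hwpos n)
        rw [slope_def_field]
        simp only [Fz]
        rw [sub_zero]
        field_simp
        ring
      have hval : -(y ^ 2 * (Real.exp (-((0:ℝ) * y)) * -y)) = y ^ 3 := by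
        rw [show -((0:ℝ) * y) = 0 by ring, Real.exp_zero]
        ring
      rw [← hval]
      exact htl.congr heq

/-- `J″` is Lipschitz on `[0, z₀]` iff
`∫_{(-∞,-1]} |y|³ e^{z₀|y|} ν(dy) < ∞` and `∫_{[1,∞)} y³ ν(dy) < ∞`. -/
theorem jsecond_lipschitzOn_iff (ν : Measure ℝ) (q z₀ : ℝ) (hq : 0 ≤ q) (hz₀ : 0 < z₀)
    (hν : ∫⁻ y, ENNReal.ofReal (min (y ^ 2) 1) ∂ν < ⊤)
    (h1 : IntegrableOn (fun y => y ^ 2 * Real.exp (z₀ * |y|)) (Set.Iic (-1)) ν)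
    (h2 : IntegrableOn (fun y => y ^ 2) (Set.Ici 1) ν) :
    (∃ K : NNReal, LipschitzOnWith K (Jsecond ν q) (Set.Icc 0 z₀)) ↔
      (IntegrableOn (fun y => |y| ^ 3 * Real.exp (z₀ * |y|)) (Set.Iic (-1)) ν ∧
        IntegrableOn (fun y => y ^ 3) (Set.Ici 1) ν) := by
  have hmin : Integrable (fun y => min (y ^ 2) 1) ν := integrable_min_sq ν hν
  constructor
  · rintro ⟨K, hK⟩
    exact forward ν q z₀ hz₀ hmin h1 h2 K hK
  · rintro ⟨hneg, hpos⟩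
    have hgint : Integrable (fun y => |y| ^ 3 * Real.exp (z₀ * max (-y) 0)) ν :=
      integrable_g hz₀ hmin hneg hpos
    have hgnn : 0 ≤ ∫ y, |y| ^ 3 * Real.exp (z₀ * max (-y) 0) ∂ν :=
      integral_nonneg fun y => by positivity
    refine ⟨(∫ y, |y| ^ 3 * Real.exp (z₀ * max (-y) 0) ∂ν).toNNReal, ?_⟩
    rw [lipschitzOnWith_iff_dist_le_mul]
    intro z₁ hz₁ z₂ hz₂
    rw [Real.dist_eq, Real.dist_eq, Real.coe_toNNReal _ hgnn]
    have hF₁ := integrable_F hz₀ hmin h1 h2 hz₁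
    have hF₂ := integrable_F hz₀ hmin h1 h2 hz₂
    have hdiff : Jsecond ν q z₁ - Jsecond ν q z₂
        = ∫ y, (y ^ 2 * Real.exp (-(z₁ * y)) - y ^ 2 * Real.exp (-(z₂ * y))) ∂ν := by
      rw [integral_sub hF₁ hF₂]; simp only [Jsecond]; ring
    rw [hdiff]
    have hb : ‖∫ y, (y ^ 2 * Real.exp (-(z₁ * y)) - y ^ 2 * Real.exp (-(z₂ * y))) ∂ν‖
        ≤ ∫ y, |z₁ - z₂| * (|y| ^ 3 * Real.exp (z₀ * max (-y) 0)) ∂ν := by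
      refine norm_integral_le_of_norm_le (hgint.const_mul _)
        (Filter.Eventually.of_forall fun y => ?_)
      rw [Real.norm_eq_abs]
      refine le_trans (F_diff_bound z₁ z₂ y) ?_
      refine mul_le_mul_of_nonneg_left ?_ (abs_nonneg _)
      refine mul_le_mul_of_nonneg_left (Real.exp_le_exp.2 ?_) (by positivity)
      exact max_le (neg_mul_le_aux hz₁.1 hz₁.2 ) (neg_mul_le_aux hz₂.1 hz₂.2)
    rw [Real.norm_eq_abs] at hb
    calc |∫ y, (y ^ 2 * Real.exp (-(z₁ * y)) - y ^ 2 * Real.exp (-(z₂ * y))) ∂ν|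
        ≤ ∫ y, |z₁ - z₂| * (|y| ^ 3 * Real.exp (z₀ * max (-y) 0)) ∂ν := hb
      _ = |z₁ - z₂| * ∫ y, |y| ^ 3 * Real.exp (z₀ * max (-y) 0) ∂ν := by
          rw [integral_const_mul]
      _ = (∫ y, |y| ^ 3 * Real.exp (z₀ * max (-y) 0) ∂ν) * dist z₁ z₂ := by
          rw [Real.dist_eq, mul_comm]
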